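/- For 1 ≤ i ≤ n−1 set Θ_i := q·g_i·(1 − X_i X_{i+1}^{−1}) + (1 − q²)·e_i in Ŷ_{r,n}^K. Then: (i) Θ_i² = (1 − q²)²(e_i − 1) + (1 − q² X_i X_{i+1}^{−1})(1 − q² X_{i+1} X_i^{−1}); (ii) Θ_i X_i = X_{i+1} Θ_i; (iii) Θ_i X_{i+1} = X_i Θ_i; (iv) Θ_i X_j = X_j Θ_i for all j ≠ i, i+1. -/

import Mathlib

/- Common setup: the affine Yokonuma-Hecke algebra presented by generators and
relations, reduced words, Bruhat order, affine Hecke algebras (of tensor-product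
type), isotypic components and induced modules. -/

set_option maxHeartbeats 1000000

open scoped TensorProduct

noncomputable section

namespace YH

/-- Generators of the affine Yokonuma-Hecke algebra: `t j` for `j : Fin n`,
`g i` (for `i` with `i+1 < n`, representing the transposition `(i, i+1)` in
0-based indexing), and `X1`, `X1inv` (the generator `X_1` and its inverse). -/
inductive YGen (n : ℕ) : Type
  | t (j : Fin n) : YGen n
  | g (i : ℕ) (h : i + 1 < n) : YGen n
  | X1 : YGen n
  | X1inv : YGen n

variable (K : Type) [Field K] (r n : ℕ) (q : K)

/-- The free algebra on the generators. -/
abbrev FY := FreeAlgebra K (YGen n)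

def tF (j : Fin n) : FY K n := FreeAlgebra.ι K (YGen.t j)
def gF (i : ℕ) (h : i + 1 < n) : FY K n := FreeAlgebra.ι K (YGen.g i h)
def X1F : FY K n := FreeAlgebra.ι K YGen.X1
def X1invF : FY K n := FreeAlgebra.ι K YGen.X1inv

/-- The idempotent `e_i = (1/r) ∑_{s=0}^{r-1} t_i^s t_{i+1}^{-s}` (as an element
of the free algebra, with `t_{i+1}^{-s}` written as `t_{i+1}^{(r-s) % r}`,
using `t^r = 1`). -/
def eF (i : ℕ) (h : i + 1 < n) : FY K n :=
  (r : K)⁻¹ • ∑ s ∈ Finset.range r,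
    tF K n ⟨i, by omega⟩ ^ s * tF K n ⟨i + 1, h⟩ ^ ((r - s) % r)

/-- The simple transposition `s_i = (i, i+1)` of `Fin n` (0-based). -/
def swapi (i : ℕ) (h : i + 1 < n) : Equiv.Perm (Fin n) :=
  Equiv.swap ⟨i, by omega⟩ ⟨i + 1, h⟩

/-- Defining relations of the affine Yokonuma-Hecke algebra `Ŷ_{r,n}(q)` over `K`. -/
inductive YRel : FY K n → FY K n → Prop
  | gg {i j : ℕ} (hi : i + 1 < n) (hj : j + 1 < n) (hij : i + 2 ≤ j ∨ j + 2 ≤ i) :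
      YRel (gF K n i hi * gF K n j hj) (gF K n j hj * gF K n i hi)
  | braid {i : ℕ} (h : i + 2 < n) :
      YRel (gF K n i (by omega) * gF K n (i + 1) h * gF K n i (by omega))
        (gF K n (i + 1) h * gF K n i (by omega) * gF K n (i + 1) h)
  | tt (i j : Fin n) : YRel (tF K n i * tF K n j) (tF K n j * tF K n i)
  | gt {i : ℕ} (hi : i + 1 < n) (j : Fin n) :
      YRel (gF K n i hi * tF K n j) (tF K n (swapi n i hi j) * gF K n i hi)
  | tr (j : Fin n) : YRel (tF K n j ^ r) 1
  | gsq {i : ℕ} (hi : i + 1 < n) :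
      YRel (gF K n i hi * gF K n i hi)
        (1 + (q - q⁻¹) • (eF K r n i hi * gF K n i hi))
  | XXinv : YRel (X1F K n * X1invF K n) 1
  | XinvX : YRel (X1invF K n * X1F K n) 1
  | gXgX (h : 1 < n) :
      YRel (gF K n 0 (by omega) * X1F K n * gF K n 0 (by omega) * X1F K n)
        (X1F K n * gF K n 0 (by omega) * X1F K n * gF K n 0 (by omega))
  | gX {i : ℕ} (hi : i + 1 < n) (h1 : 1 ≤ i) :
      YRel (gF K n i hi * X1F K n) (X1F K n * gF K n i hi)
  | tX (j : Fin n) : YRel (tF K n j * X1F K n) (X1F K n * tF K n j)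

/-- The affine Yokonuma-Hecke algebra `Ŷ_{r,n}^K`. -/
abbrev Y := RingQuot (YRel K r n q)

def mkY : FY K n →ₐ[K] Y K r n q := RingQuot.mkAlgHom K (YRel K r n q)

/-- The generator `t_j` (0-based `j`). -/
def t (j : Fin n) : Y K r n q := mkY K r n q (tF K n j)
/-- The generator `g_i` (0-based `i`, `i+1 < n`). -/
def g (i : ℕ) (h : i + 1 < n) : Y K r n q := mkY K r n q (gF K n i h)
/-- The idempotent `e_i`. -/
def e (i : ℕ) (h : i + 1 < n) : Y K r n q := mkY K r n q (eF K r n i h)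
def X1 : Y K r n q := mkY K r n q (X1F K n)
def X1inv : Y K r n q := mkY K r n q (X1invF K n)

/-- `X_{i+1} := g_i X_i g_i`, recursively. -/
def Xrec : (k : ℕ) → k < n → Y K r n q
  | 0, _ => X1 K r n q
  | k + 1, h => g K r n q k (by omega) * Xrec k (by omega) * g K r n q k (by omega)

/-- The commuting elements `X_j` (0-based `j`). -/
def X (j : Fin n) : Y K r n q := Xrec K r n q j.1 j.2

/-! ### Words and reduced expressions -/

/-- A word in the simple transpositions. -/
abbrev Word := List {i : ℕ // i + 1 < n}

/-- The permutation represented by a word. -/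
def permOfWord (l : Word n) : Equiv.Perm (Fin n) :=
  (l.map fun i => swapi n i.1 i.2).prod

/-- `l` is a reduced word for `w`. -/
def IsReducedWord (l : Word n) (w : Equiv.Perm (Fin n)) : Prop :=
  permOfWord n l = w ∧ ∀ l' : Word n, permOfWord n l' = w → l.length ≤ l'.length

/-- The product `g_{i_1} ⋯ g_{i_k}` along a word. -/
def gword (l : Word n) : Y K r n q := (l.map fun i => g K r n q i.1 i.2).prod

/-- `gw` is the family `w ↦ g_w`, i.e. `g_w` is the product of the `g_i` along
any reduced expression of `w` (well defined by Matsumoto's lemma). -/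
def GwSpec (gw : Equiv.Perm (Fin n) → Y K r n q) : Prop :=
  ∀ (w : Equiv.Perm (Fin n)) (l : Word n), IsReducedWord n l w → gw w = gword K r n q l

/-- Bruhat order: `u ≤ w` iff some reduced word of `w` has a subword which is a
reduced word of `u`. -/
def BruhatLE (u w : Equiv.Perm (Fin n)) : Prop :=
  ∃ l : Word n, IsReducedWord n l w ∧ ∃ l' : Word n, l'.Sublist l ∧ IsReducedWord n l' u

def BruhatLT (u w : Equiv.Perm (Fin n)) : Prop := BruhatLE n u w ∧ u ≠ w

/-! ### Monomials and distinguished subalgebras -/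

/-- `XU` is a family of units lifting the commuting elements `X_j` (each `X_j`
is invertible in `Ŷ_{r,n}^K`). -/
def XUSpec (XU : Fin n → (Y K r n q)ˣ) : Prop :=
  ∀ j, (XU j : Y K r n q) = X K r n q j

/-- The monomial `X^α = X_1^{α_1} ⋯ X_n^{α_n}`, `α ∈ ℤ^n`. -/
def Xpow (XU : Fin n → (Y K r n q)ˣ) (α : Fin n → ℤ) : Y K r n q :=
  ((List.finRange n).map fun j => ((XU j ^ α j : (Y K r n q)ˣ) : Y K r n q)).prod

/-- The monomial `t^β = t_1^{β_1} ⋯ t_n^{β_n}`, `β ∈ (ℤ/rℤ)^n`. -/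
def tpow (β : Fin n → ZMod r) : Y K r n q :=
  ((List.finRange n).map fun j => t K r n q j ^ (β j).val).prod

/-- The subalgebra `KT` generated by `t_1, …, t_n` (the group algebra of
`T = (ℤ/rℤ)^n`). -/
def KT : Subalgebra K (Y K r n q) := Algebra.adjoin K (Set.range (t K r n q))

/-- The Laurent polynomial subalgebra `P_n^K` generated by `X_1^{±1}, …, X_n^{±1}`. -/
def Pn (XU : Fin n → (Y K r n q)ˣ) : Subalgebra K (Y K r n q) :=
  Algebra.adjoin K
    ((Set.range fun j => ((XU j : (Y K r n q)ˣ) : Y K r n q)) ∪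
      (Set.range fun j => (((XU j)⁻¹ : (Y K r n q)ˣ) : Y K r n q)))

/-- The subalgebra `P_n^K(T)` generated by `t_1, …, t_n` and `X_1^{±1}, …, X_n^{±1}`. -/
def PT (XU : Fin n → (Y K r n q)ˣ) : Subalgebra K (Y K r n q) :=
  Algebra.adjoin K
    (Set.range (t K r n q) ∪
      (Set.range fun j => ((XU j : (Y K r n q)ˣ) : Y K r n q)) ∪
      (Set.range fun j => (((XU j)⁻¹ : (Y K r n q)ˣ) : Y K r n q)))

/-- The subalgebra of `Ŷ_{r,n}^K` generated by all `t_j`, all `X_j^{±1}`, and the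
`g_w` for `w` in a set `W` of permutations (e.g. a Young subgroup). -/
def Ysub (XU : Fin n → (Y K r n q)ˣ) (gw : Equiv.Perm (Fin n) → Y K r n q)
    (W : Set (Equiv.Perm (Fin n))) : Subalgebra K (Y K r n q) :=
  Algebra.adjoin K
    (Set.range (t K r n q) ∪
      (Set.range fun j => ((XU j : (Y K r n q)ˣ) : Y K r n q)) ∪
      (Set.range fun j => (((XU j)⁻¹ : (Y K r n q)ˣ) : Y K r n q)) ∪
      (gw '' W))

/-- The Young subgroup `S_μ` attached to a block function `c : Fin n → Fin r`
(for monotone `c`, this is the Young subgroup of the composition `μ` whose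
parts are the fiber sizes of `c`): permutations preserving the blocks. -/
def Smu (c : Fin n → Fin r) : Set (Equiv.Perm (Fin n)) :=
  {w : Equiv.Perm (Fin n) | ∀ j, c (w j) = c j}

/-- Permutations fixing all positions `≥ m` (the subgroup `S_m ⊆ S_n`). -/
def SFix (m : ℕ) : Set (Equiv.Perm (Fin n)) :=
  {w : Equiv.Perm (Fin n) | ∀ j : Fin n, m ≤ j.1 → w j = j}

/-! ### Isotypic components -/

section Modules

variable (M : Type) [AddCommGroup M] [Module K M] [Module (Y K r n q) M]
  [IsScalarTower K (Y K r n q) M]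

/-- The `V(μ)`-isotypic component of `M` as a `KT`-module: since `V(μ)` is the
one-dimensional `KT`-module on which `t_j` acts by the scalar `ζ^{c j}`, this is
the simultaneous eigenspace. Here `ζ` is a primitive `r`-th root of unity and
the simple `K(ℤ/rℤ)`-modules are `V_k : t ↦ ζ^{k}`, `k : Fin r`. -/
def Imu (ζ : K) (c : Fin n → Fin r) : Submodule K M where
  carrier := {m : M | ∀ j : Fin n, t K r n q j • m = ζ ^ ((c j : ℕ)) • m}
  add_mem' := by
    intro a b ha hb
    intro j
    rw [smul_add, ha j, hb j, smul_add]
  zero_mem' := by intro j; simp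
  smul_mem' := by
    intro k m hm
    intro j
    rw [smul_comm, hm j, smul_comm]

/-- `M_μ := ∑_{w ∈ S_n} g_w (I_μ M)`. -/
def Mmu (ζ : K) (c : Fin n → Fin r) (gw : Equiv.Perm (Fin n) → Y K r n q) :
    Submodule K M :=
  Submodule.span K
    {x : M | ∃ w : Equiv.Perm (Fin n), ∃ m ∈ Imu K r n q M ζ c, x = gw w • m}

end Modules

/-! ### Affine Hecke algebras of type A (tensor-product form)

`HH K q n r c` is the tensor product `Ĥ_{μ_1}^K ⊗ ⋯ ⊗ Ĥ_{μ_r}^K` of affine Hecke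
algebras, presented globally: generators `T_i` for those adjacencies `i, i+1`
lying in a common block of `c : Fin n → Fin r`, and invertible `Y_j` for all
`j`.  (For `r = 1` and `c` constant this is the affine Hecke algebra `Ĥ_n^K`.) -/

inductive HGen (n r : ℕ) (c : Fin n → Fin r) : Type
  | T (i : ℕ) (h : i + 1 < n) (hc : c ⟨i, by omega⟩ = c ⟨i + 1, h⟩) : HGen n r c
  | Y (j : Fin n) : HGen n r c
  | Yinv (j : Fin n) : HGen n r c

end YH

namespace YH

variable (K : Type) [Field K] (q : K) {n r : ℕ}

abbrev FH (c : Fin n → Fin r) := FreeAlgebra K (HGen n r c)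

def TFh (c : Fin n → Fin r) (i : ℕ) (h : i + 1 < n)
    (hc : c ⟨i, by omega⟩ = c ⟨i + 1, h⟩) : FH K c :=
  FreeAlgebra.ι K (HGen.T i h hc)
def YFh (c : Fin n → Fin r) (j : Fin n) : FH K c := FreeAlgebra.ι K (HGen.Y j)
def YinvFh (c : Fin n → Fin r) (j : Fin n) : FH K c := FreeAlgebra.ι K (HGen.Yinv j)

/-- Defining relations of the (tensor product of) affine Hecke algebra(s). -/
inductive HRel (c : Fin n → Fin r) : FH K c → FH K c → Prop
  | quad {i : ℕ} (h : i + 1 < n) (hc : c ⟨i, by omega⟩ = c ⟨i + 1, h⟩) :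
      HRel c ((TFh K c i h hc - algebraMap K (FH K c) q) *
          (TFh K c i h hc + algebraMap K (FH K c) q⁻¹)) 0
  | braid {i : ℕ} (h : i + 2 < n)
      (hc1 : c ⟨i, by omega⟩ = c ⟨i + 1, by omega⟩)
      (hc2 : c ⟨i + 1, by omega⟩ = c ⟨i + 2, h⟩) :
      HRel c
        (TFh K c i (by omega) hc1 * TFh K c (i + 1) (by omega) hc2 *
          TFh K c i (by omega) hc1)
        (TFh K c (i + 1) (by omega) hc2 * TFh K c i (by omega) hc1 *
          TFh K c (i + 1) (by omega) hc2)
  | TT {i j : ℕ} (hi : i + 1 < n) (hci : c ⟨i, by omega⟩ = c ⟨i + 1, hi⟩)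
      (hj : j + 1 < n) (hcj : c ⟨j, by omega⟩ = c ⟨j + 1, hj⟩)
      (hij : i + 2 ≤ j ∨ j + 2 ≤ i) :
      HRel c (TFh K c i hi hci * TFh K c j hj hcj)
        (TFh K c j hj hcj * TFh K c i hi hci)
  | YY (j k : Fin n) : HRel c (YFh K c j * YFh K c k) (YFh K c k * YFh K c j)
  | YYinv (j : Fin n) : HRel c (YFh K c j * YinvFh K c j) 1
  | YinvY (j : Fin n) : HRel c (YinvFh K c j * YFh K c j) 1
  | TYT {i : ℕ} (h : i + 1 < n) (hc : c ⟨i, by omega⟩ = c ⟨i + 1, h⟩) :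
      HRel c (TFh K c i h hc * YFh K c ⟨i, by omega⟩ * TFh K c i h hc)
        (YFh K c ⟨i + 1, h⟩)
  | TY {i : ℕ} (h : i + 1 < n) (hc : c ⟨i, by omega⟩ = c ⟨i + 1, h⟩)
      (j : Fin n) (hj1 : j.1 ≠ i) (hj2 : j.1 ≠ i + 1) :
      HRel c (TFh K c i h hc * YFh K c j) (YFh K c j * TFh K c i h hc)

/-- The algebra `Ĥ_{μ_1}^K ⊗ ⋯ ⊗ Ĥ_{μ_r}^K` (for `c` monotone with fiber sizes
`μ_k`); for `r = 1` it is the affine Hecke algebra `Ĥ_n^K` of type `A`. -/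
abbrev HH (c : Fin n → Fin r) := RingQuot (HRel K q c)

def mkH (c : Fin n → Fin r) : FH K c →ₐ[K] HH K q c := RingQuot.mkAlgHom K (HRel K q c)

/-- The generator `T_i` (for an adjacency internal to a block of `c`). -/
def Tg (c : Fin n → Fin r) (i : ℕ) (h : i + 1 < n)
    (hc : c ⟨i, by omega⟩ = c ⟨i + 1, h⟩) : HH K q c :=
  mkH K q c (TFh K c i h hc)
/-- The generator `Y_j`. -/
def Yg (c : Fin n → Fin r) (j : Fin n) : HH K q c := mkH K q c (YFh K c j)
/-- The generator `Y_j^{-1}`. -/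
def Yinvg (c : Fin n → Fin r) (j : Fin n) : HH K q c := mkH K q c (YinvFh K c j)

end YH

namespace YH

variable (K : Type) [Field K] (r n : ℕ) (q : K)

/-! ### Actions and induced modules -/

/-- The action of an algebra `R` on a module `M` as an algebra homomorphism
`R →ₐ[K] End_K(M)`. -/
def actHom (R : Type) [Ring R] [Algebra K R] (M : Type) [AddCommGroup M] [Module K M]
    [Module R M] [IsScalarTower K R M] : R →ₐ[K] Module.End K M where
  toFun a :=
    { toFun := fun m => a • m
      map_add' := fun x y => smul_add a x y
      map_smul' := fun k m => (smul_comm k a m).symm }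
  map_one' := by ext m; exact one_smul R m
  map_mul' a b := by ext m; exact mul_smul a b m
  map_zero' := by ext m; exact zero_smul R m
  map_add' a b := by ext m; exact add_smul a b m
  commutes' k := by
    ext m
    simp [Module.algebraMap_end_apply, algebraMap_smul]

/-- A `K`-space `P` with action `ρ` of an algebra `R` is "simple" if it is
nonzero and has no proper nonzero `ρ`-stable subspace. -/
def SimpleVia {R : Type} [Ring R] [Algebra K R] {P : Type} [AddCommGroup P] [Module K P]
    (ρ : R →ₐ[K] Module.End K P) : Prop :=
  Nontrivial P ∧
    ∀ Q : Submodule K P, (∀ h : R, ∀ v ∈ Q, ρ h v ∈ Q) → Q = ⊥ ∨ Q = ⊤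

/-- The relation submodule defining the induced module
`Ŷ_{r,n}^K ⊗_{Ŷ_{r,μ}^K} (V(μ) ⊗ P)`, where `P` is a module over
`Ĥ_{μ_1}^K ⊗ ⋯ ⊗ Ĥ_{μ_r}^K` (given by `ρ`), and `V(μ)` is the one-dimensional
`KT`-module attached to `c` (and a primitive `r`-th root of unity `ζ`):
we quotient `Ŷ_{r,n}^K ⊗_K P` by the `Ŷ`-span of the relations
`t_j ⊗ p = ζ^{c j} (1 ⊗ p)`, `g_i ⊗ p = 1 ⊗ T_i p` (`i` internal), and
`X_j ⊗ p = 1 ⊗ Y_j p`. -/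
def IndRel (ζ : K) (c : Fin n → Fin r) (P : Type) [AddCommGroup P] [Module K P]
    (ρ : HH K q c →ₐ[K] Module.End K P) :
    Submodule (Y K r n q) (Y K r n q ⊗[K] P) :=
  Submodule.span (Y K r n q)
    ({z : Y K r n q ⊗[K] P | ∃ (j : Fin n) (p : P),
        z = t K r n q j ⊗ₜ[K] p - (1 : Y K r n q) ⊗ₜ[K] (ζ ^ ((c j : ℕ)) • p)} ∪
      {z | ∃ (i : ℕ) (hi : i + 1 < n) (hc : c ⟨i, by omega⟩ = c ⟨i + 1, hi⟩) (p : P),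
        z = g K r n q i hi ⊗ₜ[K] p - (1 : Y K r n q) ⊗ₜ[K] (ρ (Tg K q c i hi hc) p)} ∪
      {z | ∃ (j : Fin n) (p : P),
        z = X K r n q j ⊗ₜ[K] p - (1 : Y K r n q) ⊗ₜ[K] (ρ (Yg K q c j) p)})

/-- The induced `Ŷ_{r,n}^K`-module `S_μ(L.) = Ŷ_{r,n}^K ⊗_{Ŷ_{r,μ}^K} (V(μ) ⊗ P)`. -/
def Ind (ζ : K) (c : Fin n → Fin r) (P : Type) [AddCommGroup P] [Module K P]
    (ρ : HH K q c →ₐ[K] Module.End K P) : Type :=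
  @HasQuotient.Quotient (Y K r n q ⊗[K] P) _
    (@Submodule.hasQuotient (Y K r n q) (Y K r n q ⊗[K] P) _ _ _) (IndRel K r n q ζ c P ρ)

instance (ζ : K) (c : Fin n → Fin r) (P : Type) [AddCommGroup P] [Module K P]
    (ρ : HH K q c →ₐ[K] Module.End K P) : AddCommGroup (Ind K r n q ζ c P ρ) :=
  inferInstanceAs (AddCommGroup (@HasQuotient.Quotient (Y K r n q ⊗[K] P) _
    (@Submodule.hasQuotient (Y K r n q) (Y K r n q ⊗[K] P) _ _ _) (IndRel K r n q ζ c P ρ)))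

instance (ζ : K) (c : Fin n → Fin r) (P : Type) [AddCommGroup P] [Module K P]
    (ρ : HH K q c →ₐ[K] Module.End K P) : Module (Y K r n q) (Ind K r n q ζ c P ρ) :=
  inferInstanceAs (Module (Y K r n q) (@HasQuotient.Quotient (Y K r n q ⊗[K] P) _
    (@Submodule.hasQuotient (Y K r n q) (Y K r n q ⊗[K] P) _ _ _) (IndRel K r n q ζ c P ρ)))

/-- The map skipping position `p`: `j ↦ j` if `j < p`, else `j ↦ j+1`
(the order embedding `Fin (n-1) → Fin n` avoiding `p`). -/
def skipIns (p : ℕ) (j : Fin (n - 1)) : Fin n :=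
  if j.1 < p then ⟨j.1, by have := j.2; omega⟩ else ⟨j.1 + 1, by have := j.2; omega⟩

end YH
/-! ### Auxiliary development for Statement 15 -/

namespace YH

section Aux

variable {K : Type} [Field K] {r n : ℕ} {q : K}

private lemma yrel {a b : FY K n} (h : YRel K r n q a b) :
    mkY K r n q a = mkY K r n q b :=
  RingQuot.mkAlgHom_rel K h

private lemma rel_tt (a b : Fin n) :
    t K r n q a * t K r n q b = t K r n q b * t K r n q a := by
  have h := yrel (K := K) (r := r) (n := n) (q := q) (YRel.tt a b)
  rw [map_mul, map_mul] at h
  exact h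

private lemma rel_gt (i : ℕ) (hi : i + 1 < n) (j : Fin n) :
    g K r n q i hi * t K r n q j = t K r n q (swapi n i hi j) * g K r n q i hi := by
  have h := yrel (K := K) (r := r) (n := n) (q := q) (YRel.gt hi j)
  rw [map_mul, map_mul] at h
  exact h

private lemma rel_tr (j : Fin n) : t K r n q j ^ r = 1 := by
  have h := yrel (K := K) (r := r) (n := n) (q := q) (YRel.tr j)
  rw [map_pow, map_one] at h
  exact h

private lemma rel_ggfar (i j : ℕ) (hi : i + 1 < n) (hj : j + 1 < n)
    (hij : i + 2 ≤ j ∨ j + 2 ≤ i) :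
    g K r n q i hi * g K r n q j hj = g K r n q j hj * g K r n q i hi := by
  have h := yrel (K := K) (r := r) (n := n) (q := q) (YRel.gg hi hj hij)
  rw [map_mul, map_mul] at h
  exact h

private lemma rel_braid (i : ℕ) (h2 : i + 2 < n) :
    g K r n q i (by omega) * g K r n q (i + 1) h2 * g K r n q i (by omega)
      = g K r n q (i + 1) h2 * g K r n q i (by omega) * g K r n q (i + 1) h2 := by
  have h := yrel (K := K) (r := r) (n := n) (q := q) (YRel.braid h2)
  rw [map_mul, map_mul, map_mul, map_mul] at h
  exact h

private lemma rel_gsq (i : ℕ) (hi : i + 1 < n) :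
    g K r n q i hi * g K r n q i hi
      = 1 + (q - q⁻¹) • (e K r n q i hi * g K r n q i hi) := by
  have h := yrel (K := K) (r := r) (n := n) (q := q) (YRel.gsq hi)
  rw [map_mul, map_add, map_one, map_smul, map_mul] at h
  exact h

private lemma rel_gXgX (hn : 1 < n) :
    g K r n q 0 (by omega) * X1 K r n q * g K r n q 0 (by omega) * X1 K r n q
      = X1 K r n q * g K r n q 0 (by omega) * X1 K r n q * g K r n q 0 (by omega) := by
  have h := yrel (K := K) (r := r) (n := n) (q := q) (YRel.gXgX hn)
  rw [map_mul, map_mul, map_mul, map_mul, map_mul, map_mul] at h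
  exact h

private lemma rel_gX1 (i : ℕ) (hi : i + 1 < n) (h1 : 1 ≤ i) :
    g K r n q i hi * X1 K r n q = X1 K r n q * g K r n q i hi := by
  have h := yrel (K := K) (r := r) (n := n) (q := q) (YRel.gX hi h1)
  rw [map_mul, map_mul] at h
  exact h

private lemma rel_tX1 (j : Fin n) :
    t K r n q j * X1 K r n q = X1 K r n q * t K r n q j := by
  have h := yrel (K := K) (r := r) (n := n) (q := q) (YRel.tX j)
  rw [map_mul, map_mul] at h
  exact h

/-! #### Generic word manipulation helpers -/

private lemma cont2 {M : Type} [Semigroup M] {a b c d : M} (h : a * b = c * d) (y : M) :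
    a * (b * y) = c * (d * y) := by
  rw [← mul_assoc, h, mul_assoc]

private lemma cont3 {M : Type} [Semigroup M] {a b c d e f : M} (h : a * b * c = d * e * f)
    (y : M) : a * (b * (c * y)) = d * (e * (f * y)) := by
  rw [← mul_assoc, ← mul_assoc, h, mul_assoc, mul_assoc]

private lemma cont4 {M : Type} [Semigroup M] {a b c d a' b' c' d' : M}
    (h : a * b * c * d = a' * b' * c' * d') (y : M) :
    a * (b * (c * (d * y))) = a' * (b' * (c' * (d' * y))) := by
  rw [← mul_assoc, ← mul_assoc, ← mul_assoc, h, mul_assoc, mul_assoc, mul_assoc]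

private lemma assoc3 {M : Type} [Semigroup M] {a b c d e f : M} (h : a * b * c = d * e * f) :
    a * (b * c) = d * (e * f) := by
  rw [← mul_assoc, h, mul_assoc]

private lemma word_adj {M : Type} [Monoid M] {a b x : M}
    (hbr : a * b * a = b * a * b) (hc : b * x = x * b)
    (ih : a * x * a * x = x * a * x * a) :
    b * (a * x * a) * b * (a * x * a) = a * x * a * b * (a * x * a) * b := by
  simp only [mul_assoc]
  rw [cont3 hbr (x * a), ← cont2 hc (a * (b * (x * a))), cont2 hc a,
    ← cont3 hbr (x * (a * (x * (b * a)))), cont4 ih (b * a),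
    cont2 hc (a * (x * (a * (b * a)))), assoc3 hbr, ← cont2 hc (a * b),
    ← cont3 hbr (x * (a * b))]

private lemma word_gt {M : Type} [Monoid M] {a b x : M}
    (hbr : a * b * a = b * a * b) (hc : b * x = x * b) :
    a * (b * (a * x * a) * b) = b * (a * x * a) * b * a := by
  simp only [mul_assoc]
  rw [cont3 hbr (x * (a * b)), cont2 hc (a * b), ← assoc3 hbr]

/-! #### Structure of the `X_i` -/

private lemma Xrec_succ (k : ℕ) (h : k + 1 < n) :
    Xrec K r n q (k + 1) h
      = g K r n q k h * Xrec K r n q k (Nat.lt_of_succ_lt h) * g K r n q k h := rfl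

private lemma g_Xrec_lt : ∀ (j : ℕ) (hj : j < n) (k : ℕ) (hk : k + 1 < n), j < k →
    g K r n q k hk * Xrec K r n q j hj = Xrec K r n q j hj * g K r n q k hk := by
  intro j
  induction j with
  | zero =>
    intro hj k hk hlt
    exact rel_gX1 k hk hlt
  | succ m ih =>
    intro hj k hk hlt
    rw [Xrec_succ]
    have h1 : Commute (g K r n q k hk) (g K r n q m hj) :=
      rel_ggfar k m hk hj (Or.inr (by omega))
    have h2 : Commute (g K r n q k hk) (Xrec K r n q m (Nat.lt_of_succ_lt hj)) :=
      ih (Nat.lt_of_succ_lt hj) k hk (by omega)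
    exact ((h1.mul_right h2).mul_right h1).eq

private lemma Xrec_adj : ∀ (j : ℕ) (hj : j + 1 < n),
    g K r n q j hj * Xrec K r n q j (Nat.lt_of_succ_lt hj) * g K r n q j hj *
        Xrec K r n q j (Nat.lt_of_succ_lt hj)
      = Xrec K r n q j (Nat.lt_of_succ_lt hj) * g K r n q j hj *
          Xrec K r n q j (Nat.lt_of_succ_lt hj) * g K r n q j hj := by
  intro j
  induction j with
  | zero => intro hj; exact rel_gXgX hj
  | succ m ih =>
    intro hj
    have hm : m + 1 < n := Nat.lt_of_succ_lt hj
    rw [Xrec_succ]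
    exact word_adj (rel_braid m hj) (g_Xrec_lt m (Nat.lt_of_succ_lt hm) (m + 1) hj (by omega))
      (ih hm)

private lemma g_Xrec_gt (k : ℕ) (hk : k + 1 < n) :
    ∀ (j : ℕ) (hj : j < n), k + 2 ≤ j →
      g K r n q k hk * Xrec K r n q j hj = Xrec K r n q j hj * g K r n q k hk := by
  intro j
  induction j with
  | zero => intro hj hkj; omega
  | succ m ih =>
    intro hj hkj
    rcases Nat.lt_or_ge (k + 2) (m + 1) with hlt | hge
    · rw [Xrec_succ]
      have h1 : Commute (g K r n q k hk) (g K r n q m hj) :=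
        rel_ggfar k m hk hj (Or.inl (by omega))
      have h2 : Commute (g K r n q k hk) (Xrec K r n q m (Nat.lt_of_succ_lt hj)) :=
        ih (Nat.lt_of_succ_lt hj) (by omega)
      exact ((h1.mul_right h2).mul_right h1).eq
    · have hm : m = k + 1 := by omega
      subst hm
      rw [Xrec_succ, Xrec_succ]
      exact word_gt (rel_braid k hj)
        (g_Xrec_lt k (by omega) (k + 1) hj (by omega))

private lemma Xrec_comm : ∀ (j : ℕ) (hj : j < n) (k : ℕ) (hk : k < n),
    Xrec K r n q j hj * Xrec K r n q k hk = Xrec K r n q k hk * Xrec K r n q j hj := by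
  have main : ∀ (k : ℕ) (hk : k < n) (j : ℕ) (hj : j < n), j < k →
      Xrec K r n q j hj * Xrec K r n q k hk = Xrec K r n q k hk * Xrec K r n q j hj := by
    intro k
    induction k with
    | zero => intro hk j hj hlt; omega
    | succ m ih =>
      intro hk j hj hlt
      rcases Nat.lt_or_ge j m with hjm | hjm
      · rw [Xrec_succ]
        have h1 : Commute (Xrec K r n q j hj) (g K r n q m hk) :=
          (g_Xrec_lt j hj m hk hjm).symm
        have h2 : Commute (Xrec K r n q j hj) (Xrec K r n q m (Nat.lt_of_succ_lt hk)) :=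
          ih (Nat.lt_of_succ_lt hk) j hj hjm
        exact ((h1.mul_right h2).mul_right h1).eq
      · have hjm' : j = m := by omega
        subst hjm'
        rw [Xrec_succ]
        have h := Xrec_adj (K := K) (r := r) (n := n) (q := q) j hk
        calc Xrec K r n q j hj *
              (g K r n q j hk * Xrec K r n q j (Nat.lt_of_succ_lt hk) * g K r n q j hk)
            = Xrec K r n q j (Nat.lt_of_succ_lt hk) * g K r n q j hk *
                Xrec K r n q j (Nat.lt_of_succ_lt hk) * g K r n q j hk := by
              simp only [mul_assoc]
          _ = g K r n q j hk * Xrec K r n q j (Nat.lt_of_succ_lt hk) * g K r n q j hk *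
                Xrec K r n q j (Nat.lt_of_succ_lt hk) := h.symm
          _ = g K r n q j hk * Xrec K r n q j (Nat.lt_of_succ_lt hk) * g K r n q j hk *
                Xrec K r n q j hj := rfl
  intro j hj k hk
  rcases lt_trichotomy j k with h | h | h
  · exact main k hk j hj h
  · subst h; rfl
  · exact (main j hj k hk h).symm

private lemma t_Xrec : ∀ (k : ℕ) (hk : k < n) (j : Fin n),
    t K r n q j * Xrec K r n q k hk = Xrec K r n q k hk * t K r n q j := by
  intro k
  induction k with
  | zero => intro hk j; exact rel_tX1 j
  | succ m ih =>
    intro hk j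
    have hm : m + 1 < n := hk
    have hswap : swapi n m hm (swapi n m hm j) = j := by
      show Equiv.swap _ _ (Equiv.swap _ _ j) = j
      exact Equiv.swap_apply_self _ _ _
    have e1 : t K r n q j * g K r n q m hm
        = g K r n q m hm * t K r n q (swapi n m hm j) := by
      have h := rel_gt (K := K) (r := r) (n := n) (q := q) m hm (swapi n m hm j)
      rw [hswap] at h
      exact h.symm
    have e2 : t K r n q (swapi n m hm j) * g K r n q m hm
        = g K r n q m hm * t K r n q j := (rel_gt m hm j).symm
    rw [Xrec_succ]
    calc t K r n q j *
          (g K r n q m hk * Xrec K r n q m (Nat.lt_of_succ_lt hk) * g K r n q m hk)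
        = (t K r n q j * g K r n q m hm) *
            (Xrec K r n q m (Nat.lt_of_succ_lt hk) * g K r n q m hm) := by
          simp only [mul_assoc]
      _ = g K r n q m hm *
            ((t K r n q (swapi n m hm j) * Xrec K r n q m (Nat.lt_of_succ_lt hk)) *
              g K r n q m hm) := by
          rw [e1]; simp only [mul_assoc]
      _ = g K r n q m hm *
            ((Xrec K r n q m (Nat.lt_of_succ_lt hk) * t K r n q (swapi n m hm j)) *
              g K r n q m hm) := by
          rw [ih (Nat.lt_of_succ_lt hk)]
      _ = g K r n q m hm *
            (Xrec K r n q m (Nat.lt_of_succ_lt hk) * (g K r n q m hm * t K r n q j)) := by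
          rw [mul_assoc, e2]
      _ = g K r n q m hk * Xrec K r n q m (Nat.lt_of_succ_lt hk) * g K r n q m hk *
            t K r n q j := by
          simp only [mul_assoc]

/-! #### The idempotent `e_i` -/

private lemma aux_arith1 {r a : ℕ} (ha : a < r) : (r - (r - a) % r) % r = a := by
  rcases Nat.eq_zero_or_pos a with h0 | h0
  · subst h0; simp
  · rw [Nat.mod_eq_of_lt (show r - a < r by omega), Nat.sub_sub_self ha.le,
      Nat.mod_eq_of_lt ha]

private lemma aux_arith2 {r s s' : ℕ} (hs : s < r) (hs' : s' < r) :
    ((r - s) % r + (r - s') % r) % r = (r - (s + s') % r) % r := by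
  rcases Nat.eq_zero_or_pos s with h | h
  · subst h
    rw [Nat.sub_zero, Nat.mod_self, Nat.zero_add, Nat.zero_add,
      Nat.mod_mod_of_dvd _ dvd_rfl, Nat.mod_eq_of_lt hs']
  rcases Nat.eq_zero_or_pos s' with h' | h'
  · subst h'
    rw [Nat.sub_zero, Nat.mod_self, Nat.add_zero, Nat.add_zero,
      Nat.mod_mod_of_dvd _ dvd_rfl, Nat.mod_eq_of_lt hs]
  · rw [Nat.mod_eq_of_lt (show r - s < r by omega), Nat.mod_eq_of_lt (show r - s' < r by omega)]
    rcases Nat.lt_or_ge (s + s') r with hss | hss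
    · rw [Nat.mod_eq_of_lt hss, show r - s + (r - s') = r + (r - (s + s')) by omega,
        Nat.add_mod_left]
    · have h1 : (s + s') % r = s + s' - r := by
        rw [Nat.mod_eq_sub_mod hss, Nat.mod_eq_of_lt (by omega)]
      rw [h1]
      congr 1
      omega

private lemma e_eq (i : ℕ) (hi : i + 1 < n) :
    e K r n q i hi = (r : K)⁻¹ • ∑ s ∈ Finset.range r,
      t K r n q ⟨i, Nat.lt_of_succ_lt hi⟩ ^ s * t K r n q ⟨i + 1, hi⟩ ^ ((r - s) % r) := by
  show mkY K r n q (eF K r n i hi) = _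
  unfold eF
  rw [map_smul, map_sum]
  congr 1
  refine Finset.sum_congr rfl fun s _ => ?_
  rw [map_mul, map_pow, map_pow]
  rfl

private lemma sum_symm (hr : 0 < r) (i : ℕ) (hi : i + 1 < n) :
    (∑ s ∈ Finset.range r,
        t K r n q ⟨i + 1, hi⟩ ^ s * t K r n q ⟨i, Nat.lt_of_succ_lt hi⟩ ^ ((r - s) % r))
      = ∑ s ∈ Finset.range r,
          t K r n q ⟨i, Nat.lt_of_succ_lt hi⟩ ^ s * t K r n q ⟨i + 1, hi⟩ ^ ((r - s) % r) := by
  refine Finset.sum_nbij' (fun s => (r - s) % r) (fun s => (r - s) % r) ?_ ?_ ?_ ?_ ?_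
  · intro a _; exact Finset.mem_range.2 (Nat.mod_lt _ hr)
  · intro a _; exact Finset.mem_range.2 (Nat.mod_lt _ hr)
  · intro a ha; exact aux_arith1 (Finset.mem_range.1 ha)
  · intro a ha; exact aux_arith1 (Finset.mem_range.1 ha)
  · intro a ha
    rw [aux_arith1 (Finset.mem_range.1 ha)]
    exact ((show Commute (t K r n q ⟨i + 1, hi⟩) (t K r n q ⟨i, Nat.lt_of_succ_lt hi⟩) from
      rel_tt _ _).pow_pow a ((r - a) % r)).eq

private lemma g_mul_tt (i : ℕ) (hi : i + 1 < n) (s m : ℕ) :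
    g K r n q i hi *
        (t K r n q ⟨i, Nat.lt_of_succ_lt hi⟩ ^ s * t K r n q ⟨i + 1, hi⟩ ^ m)
      = t K r n q ⟨i + 1, hi⟩ ^ s * t K r n q ⟨i, Nat.lt_of_succ_lt hi⟩ ^ m *
          g K r n q i hi := by
  have hpow : ∀ (j : Fin n) (k : ℕ), g K r n q i hi * t K r n q j ^ k
      = t K r n q (swapi n i hi j) ^ k * g K r n q i hi := by
    intro j k
    induction k with
    | zero => simp
    | succ mm ihm =>
      rw [pow_succ, ← mul_assoc, ihm, mul_assoc, rel_gt, ← mul_assoc, ← pow_succ]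
  have hs1 : swapi n i hi ⟨i, Nat.lt_of_succ_lt hi⟩ = ⟨i + 1, hi⟩ :=
    Equiv.swap_apply_left _ _
  have hs2 : swapi n i hi ⟨i + 1, hi⟩ = ⟨i, Nat.lt_of_succ_lt hi⟩ :=
    Equiv.swap_apply_right _ _
  rw [← mul_assoc, hpow, hs1, mul_assoc, hpow, hs2, ← mul_assoc]

private lemma g_mul_e (hr : 0 < r) (i : ℕ) (hi : i + 1 < n) :
    g K r n q i hi * e K r n q i hi = e K r n q i hi * g K r n q i hi := by
  rw [e_eq, mul_smul_comm, smul_mul_assoc]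
  congr 1
  rw [Finset.mul_sum]
  rw [Finset.sum_congr rfl fun s (_ : s ∈ Finset.range r) => g_mul_tt i hi s ((r - s) % r)]
  rw [← Finset.sum_mul, sum_symm hr i hi]

private lemma t_pow_mod (j : Fin n) (m : ℕ) :
    t K r n q j ^ m = t K r n q j ^ (m % r) := by
  conv_lhs => rw [← Nat.div_add_mod m r]
  rw [pow_add, pow_mul, rel_tr, one_pow, one_mul]

private lemma u_mul (hr : 0 < r) (i : ℕ) (hi : i + 1 < n) {s s' : ℕ}
    (hs : s < r) (hs' : s' < r) :
    (t K r n q ⟨i, Nat.lt_of_succ_lt hi⟩ ^ s * t K r n q ⟨i + 1, hi⟩ ^ ((r - s) % r)) *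
        (t K r n q ⟨i, Nat.lt_of_succ_lt hi⟩ ^ s' * t K r n q ⟨i + 1, hi⟩ ^ ((r - s') % r))
      = t K r n q ⟨i, Nat.lt_of_succ_lt hi⟩ ^ ((s + s') % r) *
          t K r n q ⟨i + 1, hi⟩ ^ ((r - (s + s') % r) % r) := by
  have hc : Commute (t K r n q ⟨i + 1, hi⟩) (t K r n q ⟨i, Nat.lt_of_succ_lt hi⟩) :=
    rel_tt _ _
  simp only [mul_assoc]
  rw [cont2 ((hc.pow_pow ((r - s) % r) s').eq) (t K r n q ⟨i + 1, hi⟩ ^ ((r - s') % r))]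
  rw [← mul_assoc, ← pow_add, ← pow_add]
  rw [t_pow_mod _ (s + s'), t_pow_mod _ ((r - s) % r + (r - s') % r), aux_arith2 hs hs']

private lemma e_idem (hr : 0 < r) (hrK : (r : K) ≠ 0) (i : ℕ) (hi : i + 1 < n) :
    e K r n q i hi * e K r n q i hi = e K r n q i hi := by
  rw [e_eq, smul_mul_assoc, mul_smul_comm, smul_smul, Finset.sum_mul_sum]
  have hinner : ∀ s ∈ Finset.range r,
      (∑ s' ∈ Finset.range r,
        (t K r n q ⟨i, Nat.lt_of_succ_lt hi⟩ ^ s * t K r n q ⟨i + 1, hi⟩ ^ ((r - s) % r)) *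
          (t K r n q ⟨i, Nat.lt_of_succ_lt hi⟩ ^ s' * t K r n q ⟨i + 1, hi⟩ ^ ((r - s') % r)))
      = ∑ m ∈ Finset.range r,
          t K r n q ⟨i, Nat.lt_of_succ_lt hi⟩ ^ m * t K r n q ⟨i + 1, hi⟩ ^ ((r - m) % r) := by
    intro s hs
    have hsr := Finset.mem_range.1 hs
    refine Finset.sum_nbij' (fun s' => (s + s') % r) (fun m => (m + (r - s)) % r)
      ?_ ?_ ?_ ?_ ?_
    · intro a _; exact Finset.mem_range.2 (Nat.mod_lt _ hr)
    · intro a _; exact Finset.mem_range.2 (Nat.mod_lt _ hr)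
    · intro a ha
      have haa := Finset.mem_range.1 ha
      show ((s + a) % r + (r - s)) % r = a
      rw [Nat.mod_add_mod, show s + a + (r - s) = a + r by omega, Nat.add_mod_right,
        Nat.mod_eq_of_lt haa]
    · intro a ha
      have haa := Finset.mem_range.1 ha
      show (s + (a + (r - s)) % r) % r = a
      rw [Nat.add_comm s, Nat.mod_add_mod, show a + (r - s) + s = a + r by omega,
        Nat.add_mod_right, Nat.mod_eq_of_lt haa]
    · intro a ha
      exact u_mul hr i hi hsr (Finset.mem_range.1 ha)
  rw [Finset.sum_congr rfl hinner, Finset.sum_const, Finset.card_range,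
    ← Nat.cast_smul_eq_nsmul K, smul_smul]
  congr 1
  rw [mul_assoc, inv_mul_cancel₀ hrK, mul_one]

private lemma e_mul_Xrec (i : ℕ) (hi : i + 1 < n) (k : ℕ) (hk : k < n) :
    e K r n q i hi * Xrec K r n q k hk = Xrec K r n q k hk * e K r n q i hi := by
  rw [e_eq, smul_mul_assoc, mul_smul_comm]
  congr 1
  rw [Finset.sum_mul, Finset.mul_sum]
  refine Finset.sum_congr rfl fun s _ => ?_
  have h1 : Commute (Xrec K r n q k hk) (t K r n q ⟨i, Nat.lt_of_succ_lt hi⟩ ^ s) :=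
    ((show Commute (t K r n q ⟨i, Nat.lt_of_succ_lt hi⟩) (Xrec K r n q k hk) from
      t_Xrec k hk _).symm).pow_right s
  have h2 : Commute (Xrec K r n q k hk) (t K r n q ⟨i + 1, hi⟩ ^ ((r - s) % r)) :=
    ((show Commute (t K r n q ⟨i + 1, hi⟩) (Xrec K r n q k hk) from
      t_Xrec k hk _).symm).pow_right _
  exact (h1.mul_right h2).eq.symm

/-! #### The abstract core computation -/

private lemma core {K : Type} [Field K] {R : Type} [Ring R] [Algebra K R] {q : K}
    (hq : q ≠ 0) (G E A B Ai Bi : R)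
    (hGG : G * G = 1 + (q - q⁻¹) • (E * G))
    (hGE : G * E = E * G) (hEE : E * E = E)
    (hEA : E * A = A * E) (hEB : E * B = B * E)
    (hEAi : E * Ai = Ai * E) (hEBi : E * Bi = Bi * E)
    (hAAi : A * Ai = 1) (hAiA : Ai * A = 1) (hBBi : B * Bi = 1) (hBiB : Bi * B = 1)
    (hBA : B * A = A * B) (hBAi : B * Ai = Ai * B) (hBiA : Bi * A = A * Bi)
    (hBiAi : Bi * Ai = Ai * Bi)
    (hB5 : B = G * A * G)
    (Θ : R) (hΘ : Θ = q • (G * (1 - A * Bi)) + (1 - q ^ 2) • E) :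
    Θ * Θ = (1 - q ^ 2) ^ 2 • (E - 1) + (1 - q ^ 2 • (A * Bi)) * (1 - q ^ 2 • (B * Ai))
      ∧ Θ * A = B * Θ ∧ Θ * B = A * Θ := by
  have hGinv : G * (G - (q - q⁻¹) • E) = 1 := by
    rw [mul_sub, hGG, mul_smul_comm, hGE, add_sub_cancel_right]
  have hGA : G * A = B * G - (q - q⁻¹) • (B * E) := by
    have h1 : G * A = (G * A * G) * (G - (q - q⁻¹) • E) := by
      rw [mul_assoc (G * A), hGinv, mul_one]
    rw [h1, ← hB5, mul_sub, mul_smul_comm]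
  have hGB : G * B = A * G + (q - q⁻¹) • (E * B) := by
    have h2 : G * (A * G) = B := by rw [hB5, mul_assoc]
    calc G * B = G * (G * (A * G)) := by rw [h2]
      _ = (G * G) * (A * G) := by rw [mul_assoc]
      _ = (1 + (q - q⁻¹) • (E * G)) * (A * G) := by rw [hGG]
      _ = A * G + (q - q⁻¹) • (E * (G * (A * G))) := by
          rw [add_mul, one_mul, smul_mul_assoc, mul_assoc]
      _ = A * G + (q - q⁻¹) • (E * B) := by rw [h2]
  have hAG : A * G = G * B - (q - q⁻¹) • (E * B) := by
    rw [hGB, add_sub_cancel_right]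
  have hABiG : A * (G * Bi) = G - (q - q⁻¹) • E := by
    calc A * (G * Bi) = (A * G) * Bi := by rw [mul_assoc]
      _ = (G * B) * Bi - (q - q⁻¹) • ((E * B) * Bi) := by
          rw [hAG, sub_mul, smul_mul_assoc]
      _ = G - (q - q⁻¹) • E := by
          rw [mul_assoc, hBBi, mul_one, mul_assoc, hBBi, mul_one]
  have hGBi : G * Bi = Ai * G - (q - q⁻¹) • (Ai * E) := by
    calc G * Bi = Ai * (A * (G * Bi)) := by rw [← mul_assoc, hAiA, one_mul]
      _ = Ai * G - (q - q⁻¹) • (Ai * E) := by rw [hABiG, mul_sub, mul_smul_comm]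
  have hGAi : G * Ai = Bi * G + (q - q⁻¹) • (Ai * E) := by
    have hc : (Bi * G + (q - q⁻¹) • (Ai * E)) * A = G := by
      rw [add_mul, smul_mul_assoc, mul_assoc Bi G A, hGA, mul_assoc Ai E A, hEA,
        mul_sub, mul_smul_comm, ← mul_assoc Bi B G, hBiB, one_mul,
        ← mul_assoc Bi B E, hBiB, one_mul, ← mul_assoc Ai A E, hAiA, one_mul]
      module
    calc G * Ai = ((Bi * G + (q - q⁻¹) • (Ai * E)) * A) * Ai := by rw [hc]
      _ = (Bi * G + (q - q⁻¹) • (Ai * E)) * (A * Ai) := by rw [mul_assoc]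
      _ = Bi * G + (q - q⁻¹) • (Ai * E) := by rw [hAAi, mul_one]
  -- continuation (right-associated) forms of all rewrite rules
  have cGG : ∀ y : R, G * (G * y) = y + (q - q⁻¹) • (E * (G * y)) := fun y => by
    rw [← mul_assoc, hGG, add_mul, one_mul, smul_mul_assoc, mul_assoc]
  have cGA : ∀ y : R, G * (A * y) = B * (G * y) - (q - q⁻¹) • (B * (E * y)) := fun y => by
    rw [← mul_assoc, hGA, sub_mul, smul_mul_assoc, mul_assoc, mul_assoc]
  have cGB : ∀ y : R, G * (B * y) = A * (G * y) + (q - q⁻¹) • (E * (B * y)) := fun y => by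
    rw [← mul_assoc, hGB, add_mul, smul_mul_assoc, mul_assoc, mul_assoc]
  have cGAi : ∀ y : R, G * (Ai * y) = Bi * (G * y) + (q - q⁻¹) • (Ai * (E * y)) := fun y => by
    rw [← mul_assoc, hGAi, add_mul, smul_mul_assoc, mul_assoc, mul_assoc]
  have cGBi : ∀ y : R, G * (Bi * y) = Ai * (G * y) - (q - q⁻¹) • (Ai * (E * y)) := fun y => by
    rw [← mul_assoc, hGBi, sub_mul, smul_mul_assoc, mul_assoc, mul_assoc]
  have cGE : ∀ y : R, G * (E * y) = E * (G * y) := cont2 hGE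
  have cEA : ∀ y : R, E * (A * y) = A * (E * y) := cont2 hEA
  have cEB : ∀ y : R, E * (B * y) = B * (E * y) := cont2 hEB
  have cEAi : ∀ y : R, E * (Ai * y) = Ai * (E * y) := cont2 hEAi
  have cEBi : ∀ y : R, E * (Bi * y) = Bi * (E * y) := cont2 hEBi
  have cEE : ∀ y : R, E * (E * y) = E * y := fun y => by rw [← mul_assoc, hEE]
  have cAAi : ∀ y : R, A * (Ai * y) = y := fun y => by rw [← mul_assoc, hAAi, one_mul]
  have cAiA : ∀ y : R, Ai * (A * y) = y := fun y => by rw [← mul_assoc, hAiA, one_mul]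
  have cBBi : ∀ y : R, B * (Bi * y) = y := fun y => by rw [← mul_assoc, hBBi, one_mul]
  have cBiB : ∀ y : R, Bi * (B * y) = y := fun y => by rw [← mul_assoc, hBiB, one_mul]
  have cBA : ∀ y : R, B * (A * y) = A * (B * y) := cont2 hBA
  have cBAi : ∀ y : R, B * (Ai * y) = Ai * (B * y) := cont2 hBAi
  have cBiA : ∀ y : R, Bi * (A * y) = A * (Bi * y) := cont2 hBiA
  have cBiAi : ∀ y : R, Bi * (Ai * y) = Ai * (Bi * y) := cont2 hBiAi
  subst hΘ
  refine ⟨?_, ?_, ?_⟩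
  · simp only [mul_sub, sub_mul, mul_add, add_mul, smul_add, smul_sub, smul_smul,
      smul_mul_assoc, mul_smul_comm, mul_assoc, mul_one, one_mul,
      cGG, cGA, cGB, cGAi, cGBi, cGE, cEA, cEB, cEAi, cEBi, cEE,
      cAAi, cAiA, cBBi, cBiB, cBA, cBAi, cBiA, cBiAi,
      hGG, hGA, hGB, hGAi, hGBi, hGE, hEA, hEB, hEAi, hEBi, hEE,
      hAAi, hAiA, hBBi, hBiB, hBA, hBAi, hBiA, hBiAi]
    match_scalars <;> field_simp
    all_goals ring
  · simp only [mul_sub, sub_mul, mul_add, add_mul, smul_add, smul_sub, smul_smul,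
      smul_mul_assoc, mul_smul_comm, mul_assoc, mul_one, one_mul,
      cGG, cGA, cGB, cGAi, cGBi, cGE, cEA, cEB, cEAi, cEBi, cEE,
      cAAi, cAiA, cBBi, cBiB, cBA, cBAi, cBiA, cBiAi,
      hGG, hGA, hGB, hGAi, hGBi, hGE, hEA, hEB, hEAi, hEBi, hEE,
      hAAi, hAiA, hBBi, hBiB, hBA, hBAi, hBiA, hBiAi]
    match_scalars <;> field_simp
    all_goals ring
  · simp only [mul_sub, sub_mul, mul_add, add_mul, smul_add, smul_sub, smul_smul,
      smul_mul_assoc, mul_smul_comm, mul_assoc, mul_one, one_mul,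
      cGG, cGA, cGB, cGAi, cGBi, cGE, cEA, cEB, cEAi, cEBi, cEE,
      cAAi, cAiA, cBBi, cBiB, cBA, cBAi, cBiA, cBiAi,
      hGG, hGA, hGB, hGAi, hGBi, hGE, hEA, hEB, hEAi, hEBi, hEE,
      hAAi, hAiA, hBBi, hBiB, hBA, hBAi, hBiA, hBiAi]
    match_scalars <;> field_simp
    all_goals ring

private lemma core4 {K : Type} [Field K] {R : Type} [Ring R] [Algebra K R] (q : K)
    (G E A Bi Xj : R)
    (h1 : Xj * G = G * Xj) (h2 : Xj * E = E * Xj) (h3 : Xj * A = A * Xj)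
    (h4 : Xj * Bi = Bi * Xj)
    (Θ : R) (hΘ : Θ = q • (G * (1 - A * Bi)) + (1 - q ^ 2) • E) :
    Θ * Xj = Xj * Θ := by
  subst hΘ
  simp only [mul_sub, sub_mul, mul_add, add_mul, smul_add, smul_sub, smul_smul,
    smul_mul_assoc, mul_smul_comm, mul_assoc, mul_one, one_mul,
    cont2 h1, cont2 h2, cont2 h3, cont2 h4, h1, h2, h3, h4]

/-! #### Putting everything together in `Ŷ_{r,n}` -/

lemma theta_props (hr : 0 < r) (hrK : (r : K) ≠ 0) (hq : q ≠ 0)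
    (i : ℕ) (hi : i + 1 < n) (au bu : (Y K r n q)ˣ)
    (hA : (au : Y K r n q) = Xrec K r n q i (Nat.lt_of_succ_lt hi))
    (hB : (bu : Y K r n q) = Xrec K r n q (i + 1) hi)
    (Θ : Y K r n q)
    (hΘ : Θ = q • (g K r n q i hi *
        (1 - (au : Y K r n q) * ((bu⁻¹ : (Y K r n q)ˣ) : Y K r n q))) +
      (1 - q ^ 2) • e K r n q i hi) :
    (Θ * Θ = (1 - q ^ 2) ^ 2 • (e K r n q i hi - 1) +
        (1 - q ^ 2 • ((au : Y K r n q) * ((bu⁻¹ : (Y K r n q)ˣ) : Y K r n q))) *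
        (1 - q ^ 2 • ((bu : Y K r n q) * ((au⁻¹ : (Y K r n q)ˣ) : Y K r n q))))
    ∧ Θ * (au : Y K r n q) = (bu : Y K r n q) * Θ
    ∧ Θ * (bu : Y K r n q) = (au : Y K r n q) * Θ
    ∧ ∀ (k : ℕ) (hk : k < n), k ≠ i → k ≠ i + 1 →
        Θ * Xrec K r n q k hk = Xrec K r n q k hk * Θ := by
  have hGG := rel_gsq (K := K) (r := r) (n := n) (q := q) i hi
  have hGE := g_mul_e (K := K) (q := q) hr i hi
  have hEE := e_idem (q := q) hr hrK i hi
  have hEA : e K r n q i hi * (au : Y K r n q) = (au : Y K r n q) * e K r n q i hi := by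
    rw [hA]; exact e_mul_Xrec i hi i (Nat.lt_of_succ_lt hi)
  have hEB : e K r n q i hi * (bu : Y K r n q) = (bu : Y K r n q) * e K r n q i hi := by
    rw [hB]; exact e_mul_Xrec i hi (i + 1) hi
  have hEAi := ((show Commute (e K r n q i hi) ((au : (Y K r n q)ˣ) : Y K r n q) from
    hEA).units_inv_right).eq
  have hEBi := ((show Commute (e K r n q i hi) ((bu : (Y K r n q)ˣ) : Y K r n q) from
    hEB).units_inv_right).eq
  have hCab : Commute ((au : (Y K r n q)ˣ) : Y K r n q) ((bu : (Y K r n q)ˣ) : Y K r n q) := by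
    show _ * _ = _ * _
    rw [hA, hB]
    exact Xrec_comm i (Nat.lt_of_succ_lt hi) (i + 1) hi
  have hBA := hCab.symm.eq
  have hBAi := (hCab.symm.units_inv_right).eq
  have hBiA := ((hCab.units_inv_right).symm).eq
  have hBiAi := (((hCab.units_inv_right).symm).units_inv_right).eq
  have hB5 : (bu : Y K r n q) = g K r n q i hi * (au : Y K r n q) * g K r n q i hi := by
    rw [hA, hB]; rfl
  obtain ⟨hc1, hc2, hc3⟩ := core hq (g K r n q i hi) (e K r n q i hi)
    ((au : (Y K r n q)ˣ) : Y K r n q) ((bu : (Y K r n q)ˣ) : Y K r n q)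
    ((au⁻¹ : (Y K r n q)ˣ) : Y K r n q) ((bu⁻¹ : (Y K r n q)ˣ) : Y K r n q)
    hGG hGE hEE hEA hEB hEAi hEBi au.mul_inv au.inv_mul bu.mul_inv bu.inv_mul
    hBA hBAi hBiA hBiAi hB5 Θ hΘ
  refine ⟨hc1, hc2, hc3, ?_⟩
  intro k hk hk1 hk2
  have h1 : Xrec K r n q k hk * g K r n q i hi = g K r n q i hi * Xrec K r n q k hk := by
    rcases Nat.lt_or_ge k i with hki | hki
    · exact (g_Xrec_lt k hk i hi hki).symm
    · exact (g_Xrec_gt i hi k hk (by omega)).symm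
  have h2 : Xrec K r n q k hk * e K r n q i hi = e K r n q i hi * Xrec K r n q k hk :=
    (e_mul_Xrec i hi k hk).symm
  have h3 : Xrec K r n q k hk * (au : Y K r n q) = (au : Y K r n q) * Xrec K r n q k hk := by
    rw [hA]; exact Xrec_comm k hk i (Nat.lt_of_succ_lt hi)
  have hb : Commute (Xrec K r n q k hk) ((bu : (Y K r n q)ˣ) : Y K r n q) := by
    show _ * _ = _ * _
    rw [hB]
    exact Xrec_comm k hk (i + 1) hi
  have h4 := (hb.units_inv_right).eq
  exact core4 q (g K r n q i hi) (e K r n q i hi) ((au : (Y K r n q)ˣ) : Y K r n q)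
    ((bu⁻¹ : (Y K r n q)ˣ) : Y K r n q) (Xrec K r n q k hk) h1 h2 h3 h4 Θ hΘ

end Aux

end YH

/-- Lemma 5.1 of the paper: the intertwining elements
`Θ_i = q g_i (1 - X_i X_{i+1}⁻¹) + (1 - q²) e_i` satisfy
`Θ_i² = (1-q²)²(e_i - 1) + (1 - q² X_i X_{i+1}⁻¹)(1 - q² X_{i+1} X_i⁻¹)`,
`Θ_i X_i = X_{i+1} Θ_i`, `Θ_i X_{i+1} = X_i Θ_i`, and `Θ_i X_j = X_j Θ_i` for
`j ≠ i, i+1`. -/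
theorem statement15 (K : Type) [Field K] [IsAlgClosed K] (r n : ℕ) (hr : 0 < r) (hn : 0 < n)
    (hrK : (r : K) ≠ 0) (q : K) (hq : q ≠ 0)
    (XU : Fin n → (YH.Y K r n q)ˣ) (hXU : YH.XUSpec K r n q XU)
    (i : ℕ) (hi : i + 1 < n) (Θ : YH.Y K r n q)
    (hΘ : Θ = q • (YH.g K r n q i hi *
        (1 - (XU ⟨i, by omega⟩ : YH.Y K r n q) *
          (((XU ⟨i + 1, hi⟩)⁻¹ : (YH.Y K r n q)ˣ) : YH.Y K r n q))) +
      (1 - q ^ 2) • YH.e K r n q i hi) :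
    (Θ * Θ = (1 - q ^ 2) ^ 2 • (YH.e K r n q i hi - 1) +
        (1 - q ^ 2 • ((XU ⟨i, by omega⟩ : YH.Y K r n q) *
          (((XU ⟨i + 1, hi⟩)⁻¹ : (YH.Y K r n q)ˣ) : YH.Y K r n q))) *
        (1 - q ^ 2 • ((XU ⟨i + 1, hi⟩ : YH.Y K r n q) *
          (((XU ⟨i, by omega⟩)⁻¹ : (YH.Y K r n q)ˣ) : YH.Y K r n q)))) ∧
    Θ * YH.X K r n q ⟨i, by omega⟩ = YH.X K r n q ⟨i + 1, hi⟩ * Θ ∧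
    Θ * YH.X K r n q ⟨i + 1, hi⟩ = YH.X K r n q ⟨i, by omega⟩ * Θ ∧
    ∀ j : Fin n, j.1 ≠ i → j.1 ≠ i + 1 →
      Θ * YH.X K r n q j = YH.X K r n q j * Θ := by
  obtain ⟨p1, p2, p3, p4⟩ :=
    YH.theta_props hr hrK hq i hi (XU ⟨i, Nat.lt_of_succ_lt hi⟩) (XU ⟨i + 1, hi⟩)
      (hXU _) (hXU _) Θ hΘ
  refine ⟨p1, ?_, ?_, fun j hj1 hj2 => ?_⟩
  · rw [show YH.X K r n q ⟨i, Nat.lt_of_succ_lt hi⟩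
        = ((XU ⟨i, Nat.lt_of_succ_lt hi⟩ : (YH.Y K r n q)ˣ) : YH.Y K r n q) from (hXU _).symm,
      show YH.X K r n q ⟨i + 1, hi⟩
        = ((XU ⟨i + 1, hi⟩ : (YH.Y K r n q)ˣ) : YH.Y K r n q) from (hXU _).symm]
    exact p2
  · rw [show YH.X K r n q ⟨i, Nat.lt_of_succ_lt hi⟩
        = ((XU ⟨i, Nat.lt_of_succ_lt hi⟩ : (YH.Y K r n q)ˣ) : YH.Y K r n q) from (hXU _).symm,
      show YH.X K r n q ⟨i + 1, hi⟩
        = ((XU ⟨i + 1, hi⟩ : (YH.Y K r n q)ˣ) : YH.Y K r n q) from (hXU _).symm]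
    exact p3
  · exact p4 j.1 j.2 hj1 hj2
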